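/- Suppose 0 < c₁ ≤ c₂ < 2, λ_s > 0, L > 0 with λ_s ≤ L‖x_⋆‖₂/2, and suppose at each step k: ‖x^{k+1} - x̂‖₂² ≤ ‖x^k - x̂‖₂² - (2 λ_s e_k (2 - e_k)/(9 L² ‖x_⋆‖₂²)) · (F(x^k) - F(x̂)) · ‖x^k - x̂‖₂ with e_k ∈ [c₁, c₂] and F(x^k) - F(x̂) ≥ λ_s ‖x^k - x̂‖₂. Then with c = max{|1-c₁|, |1-c₂|}, ‖x^k - x̂‖₂ ≤ (√(1 - 2λ_s²(1-c²)/(9L²‖x_⋆‖₂²)))^k · ‖x^0 - x̂‖₂ for all k ∈ ℕ. -/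
import Mathlib


/-- Linear convergence of the adaptive subgradient iterates. -/
theorem adasubgrad_linear_rate {n : ℕ} (F : EuclideanSpace ℝ (Fin n) → ℝ)
    (xstar xhat : EuclideanSpace ℝ (Fin n))
    (x : ℕ → EuclideanSpace ℝ (Fin n)) (e : ℕ → ℝ)
    (c₁ c₂ lams L : ℝ)
    (hc1 : 0 < c₁) (hc12 : c₁ ≤ c₂) (hc2 : c₂ < 2)
    (hlam : 0 < lams) (hL : 0 < L)
    (hlamL : lams ≤ L * ‖xstar‖ / 2)
    (hhat : ‖xhat‖ = ‖xstar‖) (hxs : 0 < ‖xstar‖)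
    (he : ∀ k, e k ∈ Set.Icc c₁ c₂)
    (hstep : ∀ k, ‖x (k + 1) - xhat‖ ^ 2 ≤ ‖x k - xhat‖ ^ 2 -
      (2 * lams * e k * (2 - e k) / (9 * L ^ 2 * ‖xstar‖ ^ 2)) *
        (F (x k) - F xhat) * ‖x k - xhat‖)
    (hsharp : ∀ k, F (x k) - F xhat ≥ lams * ‖x k - xhat‖) :
    ∀ k, ‖x k - xhat‖ ≤
      (Real.sqrt (1 - 2 * lams ^ 2 * (1 - (max |1 - c₁| |1 - c₂|) ^ 2) /
          (9 * L ^ 2 * ‖xstar‖ ^ 2))) ^ k * ‖x 0 - xhat‖ := by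
  set c : ℝ := max |1 - c₁| |1 - c₂| with hc
  set D : ℝ := 9 * L ^ 2 * ‖xstar‖ ^ 2 with hD
  have hDpos : 0 < D := by positivity
  set ρ : ℝ := 1 - 2 * lams ^ 2 * (1 - c ^ 2) / D with hρ
  have hclt : c < 1 := by
    apply max_lt <;> rw [abs_lt] <;> constructor <;> linarith
  have hcnn : 0 ≤ c := le_trans (abs_nonneg _) (le_max_left _ _)
  have hc2nn : 0 ≤ 1 - c ^ 2 := by nlinarith
  have hρnn : 0 ≤ ρ := by
    have h1 : 2 * lams ^ 2 * (1 - c ^ 2) ≤ D := by nlinarith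
    rw [hρ, sub_nonneg]
    exact div_le_one_of_le₀ h1 hDpos.le
  -- one step contraction in squared norms
  have hkey : ∀ k, ‖x (k + 1) - xhat‖ ^ 2 ≤ ρ * ‖x k - xhat‖ ^ 2 := by
    intro k
    obtain ⟨he1, he2⟩ := he k
    set d : ℝ := ‖x k - xhat‖ with hd
    have hdnn : 0 ≤ d := norm_nonneg _
    have hg : F (x k) - F xhat ≥ lams * d := hsharp k
    have hgnn : 0 ≤ F (x k) - F xhat := le_trans (by positivity) hg
    have hee : 1 - c ^ 2 ≤ e k * (2 - e k) := by
      have h1 : 1 - e k ≤ c := by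
        have := le_trans (le_abs_self (1 - c₁)) (le_max_left |1 - c₁| |1 - c₂|)
        linarith
      have h2 : e k - 1 ≤ c := by
        have := le_trans (neg_le_abs (1 - c₂)) (le_max_right |1 - c₁| |1 - c₂|)
        linarith
      nlinarith [sq_nonneg (1 - e k)]
    have h1 : (1 - c ^ 2) * (lams * d) * d ≤ (e k * (2 - e k)) * (F (x k) - F xhat) * d := by
      have := mul_le_mul hee hg (by positivity) (le_trans hc2nn hee)
      nlinarith
    have h2 := mul_le_mul_of_nonneg_left h1 (show (0:ℝ) ≤ 2 * lams / D by positivity)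
    have hs := hstep k
    rw [hρ]
    have heq1 : 2 * lams / D * ((e k * (2 - e k)) * (F (x k) - F xhat) * d) =
        (2 * lams * e k * (2 - e k) / D) * (F (x k) - F xhat) * d := by ring
    have heq2 : 2 * lams / D * ((1 - c ^ 2) * (lams * d) * d) =
        2 * lams ^ 2 * (1 - c ^ 2) / D * d ^ 2 := by ring
    rw [heq1, heq2] at h2
    linarith [hs]
  have hsq : ∀ k, ‖x (k + 1) - xhat‖ ≤ Real.sqrt ρ * ‖x k - xhat‖ := by
    intro k
    have h := Real.sqrt_le_sqrt (hkey k)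
    rwa [Real.sqrt_sq (norm_nonneg _), Real.sqrt_mul hρnn,
      Real.sqrt_sq (norm_nonneg _)] at h
  intro k
  induction k with
  | zero => simp
  | succ k ih =>
      calc ‖x (k + 1) - xhat‖ ≤ Real.sqrt ρ * ‖x k - xhat‖ := hsq k
        _ ≤ Real.sqrt ρ * (Real.sqrt ρ ^ k * ‖x 0 - xhat‖) :=
            mul_le_mul_of_nonneg_left ih (Real.sqrt_nonneg _)
        _ = Real.sqrt ρ ^ (k + 1) * ‖x 0 - xhat‖ := by ring
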